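/- Let θ ∈ (0, π/4] and let C = 1/(cos(θ/2) − sin(θ/2)). For all β ∈ [θ/2, θ] and γ = θ − β, it holds that C ≥ (cos γ − sin β)/(cos(θ/2 − β) − sin(θ/2 + γ)), assuming the denominator is positive. -/
import Mathlib

open Real
theorem stmt_19 (θ β γ : ℝ) (h0 : 0 < θ) (h1 : θ ≤ π / 4)
    (hβ : β ∈ Set.Icc (θ / 2) θ) (hγ : γ = θ - β)
    (hden : 0 < Real.cos (θ / 2 - β) - Real.sin (θ / 2 + γ)) :
    1 / (Real.cos (θ / 2) - Real.sin (θ / 2)) ≥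
      (Real.cos γ - Real.sin β) /
        (Real.cos (θ / 2 - β) - Real.sin (θ / 2 + γ)) := by
  obtain ⟨hb1, hb2⟩ := hβ
  subst hγ
  have hpi := Real.pi_pos
  have hcs : Real.sin (θ/2) < Real.cos (θ/2) := by
    rw [← Real.sin_pi_div_two_sub]
    apply Real.sin_lt_sin_of_lt_of_le_pi_div_two <;> nlinarith
  have hc : 0 < Real.cos (θ/2) :=
    Real.cos_pos_of_mem_Ioo ⟨by nlinarith, by nlinarith⟩
  have hsx : 0 ≤ Real.sin (β - θ/2) :=
    Real.sin_nonneg_of_nonneg_of_le_pi (by linarith) (by nlinarith)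
  rw [ge_iff_le, div_le_div_iff₀ hden (by linarith)]
  have e1 : Real.cos (θ/2 - β) = Real.cos (β - θ/2) := by
    rw [← Real.cos_neg]; ring_nf
  have e2 : Real.sin (θ/2 + (θ - β)) =
      Real.sin θ * Real.cos (β - θ/2) - Real.cos θ * Real.sin (β - θ/2) := by
    rw [show θ/2 + (θ - β) = θ - (β - θ/2) by ring, Real.sin_sub]
  have e3 : Real.cos (θ - β) =
      Real.cos (θ/2) * Real.cos (β - θ/2) + Real.sin (θ/2) * Real.sin (β - θ/2) := by
    rw [show θ - β = θ/2 - (β - θ/2) by ring, Real.cos_sub]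
  have e4 := Real.sin_add (θ/2) (β - θ/2)
  rw [show θ/2 + (β - θ/2) = β by ring] at e4
  have e5 := Real.sin_two_mul (θ/2)
  rw [show 2*(θ/2) = θ by ring] at e5
  have hs1 : Real.sin (θ/2)^2 + Real.cos (θ/2)^2 = 1 := Real.sin_sq_add_cos_sq _
  have e6 := Real.cos_two_mul (θ/2)
  rw [show 2*(θ/2) = θ by ring] at e6
  have e6' : Real.cos θ = Real.cos (θ/2)^2 - Real.sin (θ/2)^2 := by rw [e6]; nlinarith
  have hz : Real.cos (β - θ/2) * (Real.sin (θ/2)^2 + Real.cos (θ/2)^2 - 1) = 0 := by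
    rw [hs1]; ring
  rw [e1, e2, e3, e4, e5, e6']
  nlinarith [hz, mul_nonneg (mul_nonneg hc.le hsx) (sub_nonneg.2 hcs.le)]
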